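/- Let η₀ ∈ (0,1), F₀ ∈ (0, log((1+η₀)/(1−η₀))), d ∈ ℕ, let Q be a Borel probability measure on [0,1]^d, let η: [0,1]^d → [0,1] be Borel measurable, and set P = P_{η,Q}. Define ψ: [0,1]^d × {−1,1} → ℝ by ψ(x,y) = φ(y·F₀·sgn(2η(x)−1)) if |2η(x)−1| > η₀ and ψ(x,y) = φ(y·log(η(x)/(1−η(x)))) if |2η(x)−1| ≤ η₀, where sgn(t) = 1 if t ≥ 0 and sgn(t) = −1 otherwise (on the second region η(x) ∈ [(1−η₀)/2, (1+η₀)/2], so the logarithm is well defined). Then: (a) for every Borel measurable f: [0,1]^d → [−F₀, F₀], ∫ (φ(y·f(x)) − ψ(x,y))² dP(x,y) ≤ (8/(1−η₀²)) · ∫ (φ(y·f(x)) − ψ(x,y)) dP(x,y); and (b) 0 ≤ ψ(x,y) ≤ log(2/(1−η₀)) for all (x,y) ∈ [0,1]^d × {−1,1}. -/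

import Mathlib

open MeasureTheory
open scoped ENNReal NNReal

namespace DNNLogistic

noncomputable section

/-- The unit cube `[0,1]^d` as a subset of `ℝ^d`. -/
def cube (d : ℕ) : Set (Fin d → ℝ) := {x | ∀ i, x i ∈ Set.Icc (0 : ℝ) 1}

/-- The logistic loss `φ(t) = log (1 + e^{-t})`. -/
def logLoss (t : ℝ) : ℝ := Real.log (1 + Real.exp (-t))

/-- `sgn(t) = 1` if `t ≥ 0`, `sgn(t) = -1` otherwise. -/
def rsgn (t : ℝ) : ℝ := if 0 ≤ t then 1 else -1

/-- The Euclidean distance `‖x - z‖₂` on `ℝ^m`. -/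
def eucDist {m : ℕ} (x z : Fin m → ℝ) : ℝ := Real.sqrt (∑ i, (x i - z i) ^ 2)

/-- The logistic risk `R^φ_{η,Q}(f)` of `f` with respect to the conditional probability
function `η` and the marginal distribution `Q` on `[0,1]^d`. -/
def logRisk (d : ℕ) (Q : Measure (Fin d → ℝ)) (η f : (Fin d → ℝ) → ℝ) : ℝ :=
  ∫ x, (η x * logLoss (f x) + (1 - η x) * logLoss (-f x)) ∂Q

/-- The infimum of the logistic risk over all Borel measurable real-valued functions. -/
def infLogRisk (d : ℕ) (Q : Measure (Fin d → ℝ)) (η : (Fin d → ℝ) → ℝ) : ℝ :=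
  sInf {t | ∃ g : (Fin d → ℝ) → ℝ, Measurable g ∧ t = logRisk d Q η g}

/-- The excess logistic risk `E^φ_{η,Q}(f)`. -/
def excessLogRisk (d : ℕ) (Q : Measure (Fin d → ℝ)) (η f : (Fin d → ℝ) → ℝ) : ℝ :=
  logRisk d Q η f - infLogRisk d Q η

/-- The misclassification risk `R_{η,Q}(f)`; note `1{sgn(f x) = -1} = 1{f x < 0}` and
`1{sgn(f x) = 1} = 1{0 ≤ f x}`. -/
def misRisk (d : ℕ) (Q : Measure (Fin d → ℝ)) (η f : (Fin d → ℝ) → ℝ) : ℝ :=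
  ∫ x, (η x * (if f x < 0 then (1 : ℝ) else 0)
      + (1 - η x) * (if 0 ≤ f x then (1 : ℝ) else 0)) ∂Q

/-- The infimum of the misclassification risk over all Borel measurable functions. -/
def infMisRisk (d : ℕ) (Q : Measure (Fin d → ℝ)) (η : (Fin d → ℝ) → ℝ) : ℝ :=
  sInf {t | ∃ g : (Fin d → ℝ) → ℝ, Measurable g ∧ t = misRisk d Q η g}

/-- The excess misclassification error `E_{η,Q}(f)`. -/
def excessMisRisk (d : ℕ) (Q : Measure (Fin d → ℝ)) (η f : (Fin d → ℝ) → ℝ) : ℝ :=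
  misRisk d Q η f - infMisRisk d Q η

/-- The joint distribution `P_{η,Q}` on `ℝ^d × ℝ`: the marginal on the first factor is `Q`,
and the conditional distribution of the label given `x` puts mass `η x` on `1` and mass
`1 - η x` on `-1`.  It satisfies `P_{η,Q}(S) = ∫ (η x • 1_S(x,1) + (1 - η x) • 1_S(x,-1)) dQ`. -/
def PeQ (d : ℕ) (Q : Measure (Fin d → ℝ)) (η : (Fin d → ℝ) → ℝ) :
    Measure ((Fin d → ℝ) × ℝ) :=
  (Q.withDensity fun x => ENNReal.ofReal (η x)).map (fun x => (x, (1 : ℝ)))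
    + (Q.withDensity fun x => ENNReal.ofReal (1 - η x)).map (fun x => (x, (-1 : ℝ)))

/-- The logistic risk `R^φ_P(f)` with respect to a joint distribution `P` on
`[0,1]^d × {-1,1}`. -/
def jointLogRisk (d : ℕ) (P : Measure ((Fin d → ℝ) × ℝ)) (f : (Fin d → ℝ) → ℝ) : ℝ :=
  ∫ z, logLoss (z.2 * f z.1) ∂P

/-- The Lebesgue measure on the cube `[0,1]^d`. -/
def cubeVolume (d : ℕ) : Measure (Fin d → ℝ) := volume.restrict (cube d)

/-- The `n`-fold product measure `P^{⊗n}` on the sample space. -/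
def nSample (d n : ℕ) (P : Measure ((Fin d → ℝ) × ℝ)) :
    Measure (Fin n → (Fin d → ℝ) × ℝ) :=
  Measure.pi fun _ => P

/-- `fhat` is an empirical logistic-risk minimizer over the class `Fcls` from samples of
size `n`: it is jointly Borel measurable, and for every sample
`z ∈ ([0,1]^d × {-1,1})^n` the function `fhat z` belongs to `Fcls` and minimizes the
empirical logistic risk over `Fcls`. -/
def IsERM (d n : ℕ) (Fcls : Set ((Fin d → ℝ) → ℝ))
    (fhat : (Fin n → (Fin d → ℝ) × ℝ) → (Fin d → ℝ) → ℝ) : Prop :=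
  Measurable (fun p : (Fin n → (Fin d → ℝ) × ℝ) × (Fin d → ℝ) => fhat p.1 p.2) ∧
  ∀ z : Fin n → (Fin d → ℝ) × ℝ, (∀ i, z i ∈ (cube d) ×ˢ ({-1, 1} : Set ℝ)) →
    fhat z ∈ Fcls ∧
    ∀ f ∈ Fcls,
      ∑ i, logLoss ((z i).2 * fhat z ((z i).1)) ≤ ∑ i, logLoss ((z i).2 * f ((z i).1))

/-- The successive hidden layers of a fully connected ReLU network:
`u₀ = x` and `u_{k+1} = σ_{v_{k+1}}(W_k u_k)`. -/
def fnnHidden (m : ℕ → ℕ) (W : ∀ k : ℕ, Matrix (Fin (m (k + 1))) (Fin (m k)) ℝ)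
    (v : ∀ k : ℕ, Fin (m k) → ℝ) : (k : ℕ) → (Fin (m 0) → ℝ) → (Fin (m k) → ℝ)
  | 0 => fun x => x
  | (k + 1) => fun x j => max ((W k).mulVec (fnnHidden m W v k x) j - v (k + 1) j) 0

/-- `f ∈ F^FNN_d(G, N, S, B, F)`: `f : ℝ^d → ℝ` is realized by a fully connected ReLU
network `x ↦ W_L σ_{v_L} W_{L-1} ⋯ W_1 σ_{v_1} W_0 x` with depth `L ≤ G`, hidden widths
at most `N`, at most `S` nonzero entries among all weight matrices and bias vectors, all
entries bounded by `B` in absolute value, and `sup_{x ∈ [0,1]^d} |f x| ≤ F`. -/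
def IsFNN (d : ℕ) (G N S B : ℝ) (F : ℝ≥0∞) (f : (Fin d → ℝ) → ℝ) : Prop :=
  ∃ (L : ℕ) (m : ℕ → ℕ) (W : ∀ k : ℕ, Matrix (Fin (m (k + 1))) (Fin (m k)) ℝ)
    (v : ∀ k : ℕ, Fin (m k) → ℝ) (hm0 : m 0 = d) (hmL : m (L + 1) = 1),
    1 ≤ L ∧ (L : ℝ) ≤ G ∧
    (∀ k : ℕ, 1 ≤ k → k ≤ L → (m k : ℝ) ≤ N) ∧
    (((∑ k ∈ Finset.range (L + 1),
          Set.ncard {p : Fin (m (k + 1)) × Fin (m k) | W k p.1 p.2 ≠ 0}) +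
        (∑ k ∈ Finset.Icc 1 L, Set.ncard {j : Fin (m k) | v k j ≠ 0}) : ℝ) ≤ S) ∧
    (∀ k : ℕ, k ≤ L → ∀ i j, |W k i j| ≤ B) ∧
    (∀ k : ℕ, 1 ≤ k → k ≤ L → ∀ j, |v k j| ≤ B) ∧
    (∀ x ∈ cube d, ENNReal.ofReal |f x| ≤ F) ∧
    (∀ x : Fin d → ℝ,
      f x = (W L).mulVec (fnnHidden m W v L fun i => x (Fin.cast hm0 i)) (Fin.cast hmL.symm 0))

/-- The partial derivative (within the cube) of `f` in the `i`-th coordinate direction. -/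
def pderivW (m : ℕ) (i : Fin m) (f : (Fin m → ℝ) → ℝ) : (Fin m → ℝ) → ℝ :=
  fun x => fderivWithin ℝ f (cube m) x (Pi.single i 1)

/-- The iterated partial derivative of `f` along the list of coordinate directions `l`. -/
def derivListW (m : ℕ) : List (Fin m) → ((Fin m → ℝ) → ℝ) → ((Fin m → ℝ) → ℝ)
  | [], f => f
  | (i :: l), f => derivListW m l (pderivW m i f)

/-- Membership in the Hölder ball `B^β_r([0,1]^m)`: with `k = ⌈β⌉ - 1` and
`λ = β - ⌈β⌉ + 1`, `f` has continuous partial derivatives (within the cube) up to order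
`k`, and the maximum of the sup-norms of its derivatives of order at most `k` plus the
maximum of the Hölder-`λ` seminorms of its derivatives of order `k` is at most `r`. -/
def MemHolderBall (m : ℕ) (β r : ℝ) (f : (Fin m → ℝ) → ℝ) : Prop :=
  (∀ l : List (Fin m), l.length < ⌈β⌉₊ - 1 →
    DifferentiableOn ℝ (derivListW m l f) (cube m)) ∧
  (∀ l : List (Fin m), l.length ≤ ⌈β⌉₊ - 1 →
    ContinuousOn (derivListW m l f) (cube m)) ∧
  ∃ A Bc : ℝ, A + Bc ≤ r ∧
    (∀ l : List (Fin m), l.length ≤ ⌈β⌉₊ - 1 → ∀ x ∈ cube m, |derivListW m l f x| ≤ A) ∧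
    (∀ l : List (Fin m), l.length = ⌈β⌉₊ - 1 → ∀ x ∈ cube m, ∀ z ∈ cube m, x ≠ z →
      |derivListW m l f x - derivListW m l f z| ≤ Bc * eucDist x z ^ (β - (⌈β⌉₊ : ℝ) + 1))

/-- `f ∈ G^M_d(dmax)`: on `[0,1]^d`, `f` computes the maximum of at most `dmax` of its
input coordinates. -/
def GM (d dmax : ℕ) (f : (Fin d → ℝ) → ℝ) : Prop :=
  ∃ (I : Finset (Fin d)) (hI : I.Nonempty), I.card ≤ dmax ∧
    ∀ x ∈ cube d, f x = I.sup' hI fun i => x i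

/-- `f ∈ G^H_d(dstar, β, r)`: on `[0,1]^d`, `f` depends on exactly `dstar` of its input
coordinates, through a function in the Hölder ball `B^β_r([0,1]^{dstar})`. -/
def GH (d dstar : ℕ) (β r : ℝ) (f : (Fin d → ℝ) → ℝ) : Prop :=
  ∃ (I : Finset (Fin d)) (hI : I.card = dstar) (g : (Fin dstar → ℝ) → ℝ),
    MemHolderBall dstar β r g ∧
    ∀ x ∈ cube d, f x = g fun j => x ↑(I.orderIsoOfFin hI j)

/-- Iterated composition `h_{n-1} ∘ ⋯ ∘ h_1 ∘ h_0` of a chain of maps with varying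
dimensions `D : ℕ → ℕ`. -/
def depChain (D : ℕ → ℕ) (h : ∀ i : ℕ, (Fin (D i) → ℝ) → (Fin (D (i + 1)) → ℝ)) :
    (n : ℕ) → (Fin (D 0) → ℝ) → (Fin (D n) → ℝ)
  | 0 => fun x => x
  | (n + 1) => fun x => h n (depChain D h n x)

/-- `f ∈ G^CHOM_d(q, K, dmax, dstar, β, r)`: on `[0,1]^d`, `f` is a composition
`h_q ∘ ⋯ ∘ h_0` where `h_0 : [0,1]^d → [0,1]^K`, `h_i : [0,1]^K → [0,1]^K` for
`0 < i < q`, `h_q : [0,1]^{d or K} → ℝ`, and each coordinate function of each `h_i`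
belongs to `G^H(dstar, β, r) ∪ G^M(dmax)`. -/
def GCHOM (q d dmax dstar K : ℕ) (β r : ℝ) (f : (Fin d → ℝ) → ℝ) : Prop :=
  ∃ (D : ℕ → ℕ) (h : ∀ i : ℕ, (Fin (D i) → ℝ) → (Fin (D (i + 1)) → ℝ))
    (hD0 : D 0 = d) (hDq : D (q + 1) = 1),
    (∀ i : ℕ, 1 ≤ i → i ≤ q → D i = K) ∧
    (∀ i : ℕ, i ≤ q → ∀ j : Fin (D (i + 1)),
      GH (D i) dstar β r (fun x => h i x j) ∨ GM (D i) dmax (fun x => h i x j)) ∧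
    (∀ i : ℕ, i < q → ∀ x ∈ cube (D i), h i x ∈ cube (D (i + 1))) ∧
    (∀ x ∈ cube d,
      f x = depChain D h (q + 1) (fun i => x (Fin.cast hD0 i)) (Fin.cast hDq.symm 0))

/-- `f ∈ G^CH_d(q, K, dstar, β, r)`: as `G^CHOM`, but every coordinate function belongs
to `G^H(dstar, β, r)`. -/
def GCH (q d dstar K : ℕ) (β r : ℝ) (f : (Fin d → ℝ) → ℝ) : Prop :=
  ∃ (D : ℕ → ℕ) (h : ∀ i : ℕ, (Fin (D i) → ℝ) → (Fin (D (i + 1)) → ℝ))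
    (hD0 : D 0 = d) (hDq : D (q + 1) = 1),
    (∀ i : ℕ, 1 ≤ i → i ≤ q → D i = K) ∧
    (∀ i : ℕ, i ≤ q → ∀ j : Fin (D (i + 1)), GH (D i) dstar β r (fun x => h i x j)) ∧
    (∀ i : ℕ, i < q → ∀ x ∈ cube (D i), h i x ∈ cube (D (i + 1))) ∧
    (∀ x ∈ cube d,
      f x = depChain D h (q + 1) (fun i => x (Fin.cast hD0 i)) (Fin.cast hDq.symm 0))

/-- The sup-norm over the cube of the (componentwise) difference of two vector-valued
functions. -/
def supDiffVec (m k : ℕ) (g g' : (Fin m → ℝ) → (Fin k → ℝ)) : ℝ :=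
  sSup {t | ∃ x ∈ cube m, ∃ j : Fin k, t = |g x j - g' x j|}

/-- The binary entropy function `H`. -/
def entH (t : ℝ) : ℝ :=
  if t = 0 ∨ t = 1 then 0 else t * Real.log (1 / t) + (1 - t) * Real.log (1 / (1 - t))

/-- `sup { 1/(2(2 + e^t + e^{-t})) : min u v ≤ t ≤ max u v }`. -/
def wSup (u v : ℝ) : ℝ :=
  sSup {s | ∃ t ∈ Set.Icc (min u v) (max u v), s = 1 / (2 * (2 + Real.exp t + Real.exp (-t)))}

/-- The function `J` of Statement 19. -/
def Jfun (x y : ℝ) : ℝ :=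
  (x + y) * Real.log (2 / (x + y)) + (2 - x - y) * Real.log (2 / (2 - x - y))
    - (x * Real.log (1 / x) + (1 - x) * Real.log (1 / (1 - x))
        + y * Real.log (1 / y) + (1 - y) * Real.log (1 / (1 - y)))

/-- The grid `G_{Q,d}` of points of `[0,1]^d` whose coordinates are odd multiples of
`1/(2Q)`. -/
def oddGrid (d Qn : ℕ) : Set (Fin d → ℝ) :=
  {a | a ∈ cube d ∧ ∀ i, ∃ k : ℤ, Odd k ∧ a i = (k : ℝ) / (2 * (Qn : ℝ))}


/-! ### Auxiliary lemmas for statement12 -/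

section Statement12Aux

/-- The sigmoid function. -/
def sigm (t : ℝ) : ℝ := Real.exp t / (1 + Real.exp t)

lemma logLoss_nonneg (t : ℝ) : 0 ≤ logLoss t := by
  unfold logLoss
  have := Real.exp_pos (-t)
  have : (1:ℝ) ≤ 1 + Real.exp (-t) := by linarith
  exact Real.log_nonneg this

lemma logLoss_anti {s t : ℝ} (h : s ≤ t) : logLoss t ≤ logLoss s := by
  unfold logLoss
  apply Real.log_le_log (by positivity)
  have := Real.exp_le_exp.mpr (neg_le_neg h)
  linarith

lemma logLoss_lip (a b : ℝ) : |logLoss a - logLoss b| ≤ |a - b| := by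
  wlog hab : a ≤ b generalizing a b
  · rw [abs_sub_comm, abs_sub_comm a b]; exact this b a (le_of_not_ge hab)
  have h1 : logLoss b ≤ logLoss a := logLoss_anti hab
  have h2 : logLoss a - logLoss b ≤ b - a := by
    unfold logLoss
    have hkey : 1 + Real.exp (-a) ≤ Real.exp (b - a) * (1 + Real.exp (-b)) := by
      have h3 : (1:ℝ) ≤ Real.exp (b - a) := Real.one_le_exp (by linarith)
      have h4 : Real.exp (b - a) * Real.exp (-b) = Real.exp (-a) := by
        rw [← Real.exp_add]; ring_nf
      nlinarith [Real.exp_pos (-b)]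
    have hstep : Real.log (1 + Real.exp (-a)) ≤ (b - a) + Real.log (1 + Real.exp (-b)) := by
      calc Real.log (1 + Real.exp (-a)) ≤ Real.log (Real.exp (b-a) * (1 + Real.exp (-b))) :=
            Real.log_le_log (by positivity) hkey
        _ = (b - a) + Real.log (1 + Real.exp (-b)) := by
            rw [Real.log_mul (by positivity) (by positivity), Real.log_exp]
    linarith
  rw [abs_sub_le_iff]
  constructor
  · calc logLoss a - logLoss b ≤ b - a := h2
      _ ≤ |a - b| := by rw [abs_sub_comm]; exact le_abs_self _
  · have : logLoss b - logLoss a ≤ 0 := by linarith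
    exact this.trans (abs_nonneg _)

lemma sigm_hasDeriv (t : ℝ) : HasDerivAt sigm (sigm t * (1 - sigm t)) t := by
  unfold sigm
  have h0 : (1 : ℝ) + Real.exp t ≠ 0 := by positivity
  have h : HasDerivAt (fun t => Real.exp t / (1 + Real.exp t))
      ((Real.exp t * (1 + Real.exp t) - Real.exp t * Real.exp t) / (1 + Real.exp t)^2) t := by
    have hd : HasDerivAt (fun t : ℝ => 1 + Real.exp t) (Real.exp t) t := by
      simpa using (Real.hasDerivAt_exp t).const_add 1
    exact (Real.hasDerivAt_exp t).div hd h0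
  convert h using 1
  field_simp

lemma sigm_neg (t : ℝ) : sigm (-t) = 1 - sigm t := by
  unfold sigm
  rw [Real.exp_neg]
  have h := Real.exp_pos t
  field_simp
  ring

lemma logLoss_hasDeriv (t : ℝ) : HasDerivAt logLoss (sigm t - 1) t := by
  unfold logLoss
  have h0 : (1 : ℝ) + Real.exp (-t) ≠ 0 := by positivity
  have h : HasDerivAt (fun t : ℝ => Real.log (1 + Real.exp (-t)))
      ((-Real.exp (-t)) / (1 + Real.exp (-t))) t := by
    have he : HasDerivAt (fun t : ℝ => 1 + Real.exp (-t)) (-Real.exp (-t)) t := by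
      have := (Real.hasDerivAt_exp (-t)).comp t (hasDerivAt_neg t)
      simpa using (this.const_add 1)
    simpa using he.log h0
  convert h using 1
  have : sigm t - 1 = -sigm (-t) := by rw [sigm_neg]; ring
  rw [this]; unfold sigm; ring

lemma continuous_logLoss : Continuous logLoss := by
  unfold logLoss
  have h : Continuous fun t : ℝ => 1 + Real.exp (-t) := by continuity
  exact h.log fun t => by positivity

lemma measurable_rsgn : Measurable rsgn := by
  unfold rsgn
  exact Measurable.ite (measurableSet_le measurable_const measurable_id)
    measurable_const measurable_const

variable {η₀ F₀ : ℝ}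

lemma sigm_deriv_ge (hη₀ : η₀ ∈ Set.Ioo (0:ℝ) 1) {t : ℝ}
    (h1 : -Real.log ((1+η₀)/(1-η₀)) ≤ t) (h2 : t ≤ Real.log ((1+η₀)/(1-η₀))) :
    (1-η₀^2)/4 ≤ sigm t * (1 - sigm t) := by
  obtain ⟨h0, hlt⟩ := hη₀
  set U : ℝ := (1+η₀)/(1-η₀) with hU
  have hUpos : 0 < U := by apply div_pos <;> linarith
  have hexpM : Real.exp (Real.log U) = U := Real.exp_log hUpos
  have hu1 : Real.exp t ≤ U := by
    calc Real.exp t ≤ Real.exp (Real.log U) := Real.exp_le_exp.mpr h2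
      _ = U := hexpM
  have hu2 : 1/U ≤ Real.exp t := by
    have : Real.exp (-(Real.log U)) ≤ Real.exp t := Real.exp_le_exp.mpr h1
    rwa [Real.exp_neg, hexpM, inv_eq_one_div] at this
  set u : ℝ := Real.exp t with hu
  have hup : 0 < u := Real.exp_pos t
  have h1u : (0:ℝ) < 1 + u := by positivity
  have hval : sigm t * (1 - sigm t) = u / (1+u)^2 := by
    have hs : sigm t = u/(1+u) := rfl
    rw [hs]
    have h9 : 1 - u/(1+u) = 1/(1+u) := by field_simp; ring
    rw [h9, div_mul_div_comm, mul_one, sq]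
  rw [hval]
  rw [hU, le_div_iff₀ (by linarith)] at hu1
  have hu2' : (1-η₀)/(1+η₀) ≤ u := by
    rwa [hU, one_div_div] at hu2
  rw [div_le_iff₀ (by linarith)] at hu2'
  have h1n : (0:ℝ) ≤ 1 + η₀ - u * (1-η₀) := by linarith
  have h2n : (0:ℝ) ≤ u * (1+η₀) - (1-η₀) := by linarith
  rw [div_le_div_iff₀ (by norm_num) (by positivity)]
  nlinarith [mul_nonneg h1n h2n]

lemma sigm_strong_mono (hη₀ : η₀ ∈ Set.Ioo (0:ℝ) 1) {s t : ℝ}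
    (hs : -Real.log ((1+η₀)/(1-η₀)) ≤ s) (hst : s ≤ t) (ht : t ≤ Real.log ((1+η₀)/(1-η₀))) :
    (1-η₀^2)/4 * (t - s) ≤ sigm t - sigm s := by
  set M := Real.log ((1+η₀)/(1-η₀)) with hM
  set c : ℝ := (1-η₀^2)/4 with hc
  have hmono : MonotoneOn (fun t => sigm t - c * t) (Set.Icc (-M) M) := by
    apply monotoneOn_of_deriv_nonneg (convex_Icc _ _)
    · apply Continuous.continuousOn
      exact (continuous_iff_continuousAt.mpr fun x => ((sigm_hasDeriv x).sub
        ((hasDerivAt_id x).const_mul c)).continuousAt)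
    · intro x _
      exact ((sigm_hasDeriv x).sub ((hasDerivAt_id x).const_mul c)).differentiableAt.differentiableWithinAt
    · intro x hx
      rw [interior_Icc] at hx
      have hd : deriv (fun t => sigm t - c * t) x = sigm x * (1 - sigm x) - c := by
        have := (sigm_hasDeriv x).fun_sub (((hasDerivAt_id x).const_mul c))
        simpa using this.deriv
      rw [hd, sub_nonneg]
      exact sigm_deriv_ge hη₀ hx.1.le hx.2.le
  have := hmono (Set.mem_Icc.mpr ⟨hs, hst.trans ht⟩) (Set.mem_Icc.mpr ⟨hs.trans hst, ht⟩) hst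
  simp only at this
  linarith

/-- Quadratic growth of `t ↦ e·φ(t) + (1-e)·φ(-t)` on `[-M, M]`. -/
lemma quad_growth (hη₀ : η₀ ∈ Set.Ioo (0:ℝ) 1) {e a b : ℝ}
    (ha1 : -Real.log ((1+η₀)/(1-η₀)) ≤ a) (ha2 : a ≤ Real.log ((1+η₀)/(1-η₀)))
    (hb1 : -Real.log ((1+η₀)/(1-η₀)) ≤ b) (hb2 : b ≤ Real.log ((1+η₀)/(1-η₀))) :
    (sigm b - e) * (a - b) + (1-η₀^2)/8 * (a-b)^2
      ≤ (e * logLoss a + (1-e) * logLoss (-a)) - (e * logLoss b + (1-e) * logLoss (-b)) := by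
  set M := Real.log ((1+η₀)/(1-η₀)) with hM
  set c : ℝ := (1-η₀^2)/4 with hc
  set G : ℝ → ℝ := fun t => (e * logLoss t + (1-e) * logLoss (-t))
    - (sigm b - e) * t - c/2 * (t-b)^2 with hG
  have hGd : ∀ t : ℝ, HasDerivAt G (sigm t - sigm b - c * (t - b)) t := by
    intro t
    have h1 : HasDerivAt (fun t : ℝ => logLoss (-t)) (-(sigm (-t) - 1)) t :=
      (logLoss_hasDeriv (-t)).comp t (hasDerivAt_neg t) |>.congr_deriv (by ring)
    have h2 : HasDerivAt (fun t : ℝ => e * logLoss t + (1-e) * logLoss (-t))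
        (e * (sigm t - 1) + (1-e) * (-(sigm (-t) - 1))) t :=
      ((logLoss_hasDeriv t).const_mul e).add (h1.const_mul (1-e))
    have h3 : HasDerivAt (fun t : ℝ => (sigm b - e) * t) (sigm b - e) t := by
      simpa using (hasDerivAt_id t).const_mul (sigm b - e)
    have h4 : HasDerivAt (fun t : ℝ => c/2 * (t-b)^2) (c/2 * (2*(t-b))) t := by
      have : HasDerivAt (fun t : ℝ => (t-b)^2) (2*(t-b)) t := by
        simpa using ((hasDerivAt_id t).sub_const b).fun_pow 2
      exact this.const_mul (c/2)
    have := (h2.fun_sub h3).fun_sub h4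
    refine this.congr_deriv ?_
    rw [sigm_neg]
    ring
  have key : G b ≤ G a := by
    rcases le_total b a with hab | hab
    · have hmono : MonotoneOn G (Set.Icc b M) := by
        apply monotoneOn_of_deriv_nonneg (convex_Icc _ _)
        · exact Continuous.continuousOn (continuous_iff_continuousAt.mpr fun x => (hGd x).continuousAt)
        · intro x _; exact (hGd x).differentiableAt.differentiableWithinAt
        · intro x hx
          rw [interior_Icc] at hx
          rw [(hGd x).deriv, sub_nonneg]
          have h' := sigm_strong_mono hη₀ hb1 hx.1.le hx.2.le
          rw [← hc] at h'
          linarith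
      exact hmono (Set.mem_Icc.mpr ⟨le_refl b, hb2⟩) (Set.mem_Icc.mpr ⟨hab, ha2⟩) hab
    · have hanti : AntitoneOn G (Set.Icc (-M) b) := by
        apply antitoneOn_of_deriv_nonpos (convex_Icc _ _)
        · exact Continuous.continuousOn (continuous_iff_continuousAt.mpr fun x => (hGd x).continuousAt)
        · intro x _; exact (hGd x).differentiableAt.differentiableWithinAt
        · intro x hx
          rw [interior_Icc] at hx
          rw [(hGd x).deriv, sub_nonpos]
          have h' := sigm_strong_mono hη₀ hx.1.le hx.2.le hb2
          rw [← hc] at h'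
          linarith
      exact hanti (Set.mem_Icc.mpr ⟨ha1, hab⟩) (Set.mem_Icc.mpr ⟨hb1, le_refl b⟩) hab
  have hexp : G b = (e * logLoss b + (1-e) * logLoss (-b)) - (sigm b - e) * b := by
    simp [hG]
  simp only [hG] at key
  have hc8 : (1-η₀^2)/8 = c/2 := by rw [hc]; ring
  rw [hc8]
  nlinarith [key]

lemma sigm_log (e : ℝ) (h0 : 0 < e) (h1 : e < 1) : sigm (Real.log (e/(1-e))) = e := by
  unfold sigm
  have h1e : (1:ℝ) - e ≠ 0 := ne_of_gt (by linarith)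
  rw [Real.exp_log (div_pos h0 (by linarith))]
  have h9 : 1 + e/(1-e) = 1/(1-e) := by field_simp; ring
  rw [h9, div_div_div_cancel_right₀ h1e, div_one]

lemma log_ratio_mem (hη₀ : η₀ ∈ Set.Ioo (0:ℝ) 1) {e : ℝ} (he : |2*e-1| ≤ η₀) :
    -Real.log ((1+η₀)/(1-η₀)) ≤ Real.log (e/(1-e)) ∧
      Real.log (e/(1-e)) ≤ Real.log ((1+η₀)/(1-η₀)) ∧ 0 < e ∧ e < 1 := by
  obtain ⟨h0, hlt⟩ := hη₀
  rw [abs_le] at he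
  have he0 : 0 < e := by linarith
  have he1 : e < 1 := by linarith
  refine ⟨?_, ?_, he0, he1⟩
  · rw [← Real.log_inv, ← one_div, one_div_div]
    apply Real.log_le_log (by apply div_pos <;> linarith)
    rw [div_le_div_iff₀ (by linarith) (by linarith)]
    nlinarith
  · apply Real.log_le_log (by apply div_pos <;> linarith)
    rw [div_le_div_iff₀ (by linarith) (by linarith)]
    nlinarith

lemma sigm_lt_of_lt (hη₀ : η₀ ∈ Set.Ioo (0:ℝ) 1) {t : ℝ}
    (h1 : -Real.log ((1+η₀)/(1-η₀)) ≤ t) (h2 : t < Real.log ((1+η₀)/(1-η₀))) :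
    sigm t < (1+η₀)/2 := by
  obtain ⟨h0, hlt⟩ := hη₀
  have hsM : sigm (Real.log ((1+η₀)/(1-η₀))) = (1+η₀)/2 := by
    have harg : (1+η₀)/2 / (1 - (1+η₀)/2) = (1+η₀)/(1-η₀) := by
      rw [show (1:ℝ) - (1+η₀)/2 = (1-η₀)/2 by ring]
      rw [div_div_div_cancel_right₀ (by norm_num : (2:ℝ) ≠ 0)]
    have := sigm_log ((1+η₀)/2) (by linarith) (by linarith)
    rwa [harg] at this
  have := sigm_strong_mono ⟨h0, hlt⟩ h1 h2.le (le_refl _)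
  have hc : 0 < (1-η₀^2)/4 * (Real.log ((1+η₀)/(1-η₀)) - t) := by
    apply mul_pos
    · nlinarith
    · linarith
  rw [hsM] at this
  linarith

lemma sigm_gt_of_gt (hη₀ : η₀ ∈ Set.Ioo (0:ℝ) 1) {t : ℝ}
    (h1 : -Real.log ((1+η₀)/(1-η₀)) < t) (h2 : t ≤ Real.log ((1+η₀)/(1-η₀))) :
    (1-η₀)/2 < sigm t := by
  obtain ⟨h0, hlt⟩ := hη₀
  have hsM : sigm (-Real.log ((1+η₀)/(1-η₀))) = (1-η₀)/2 := by
    rw [sigm_neg]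
    have harg : (1+η₀)/2 / (1 - (1+η₀)/2) = (1+η₀)/(1-η₀) := by
      rw [show (1:ℝ) - (1+η₀)/2 = (1-η₀)/2 by ring]
      rw [div_div_div_cancel_right₀ (by norm_num : (2:ℝ) ≠ 0)]
    have := sigm_log ((1+η₀)/2) (by linarith) (by linarith)
    rw [harg] at this
    rw [this]; ring
  have := sigm_strong_mono ⟨h0, hlt⟩ (le_refl _) h1.le h2
  have hc : 0 < (1-η₀^2)/4 * (t - (-Real.log ((1+η₀)/(1-η₀)))) := by
    apply mul_pos
    · nlinarith
    · linarith
  rw [hsM] at this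
  linarith

/-- The core pointwise inequality. -/
lemma core_pointwise (hη₀ : η₀ ∈ Set.Ioo (0:ℝ) 1)
    (hF₀ : F₀ ∈ Set.Ioo (0:ℝ) (Real.log ((1+η₀)/(1-η₀))))
    {e a : ℝ} (he : e ∈ Set.Icc (0:ℝ) 1) (ha : a ∈ Set.Icc (-F₀) F₀)
    (b : ℝ) (hb : b = if η₀ < |2*e-1| then F₀ * rsgn (2*e-1) else Real.log (e/(1-e))) :
    e * (logLoss a - logLoss b)^2 + (1-e) * (logLoss (-a) - logLoss (-b))^2
      ≤ 8/(1-η₀^2) *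
        (e * (logLoss a - logLoss b) + (1-e) * (logLoss (-a) - logLoss (-b))) := by
  obtain ⟨h0, hlt⟩ := hη₀
  set M := Real.log ((1+η₀)/(1-η₀)) with hM
  obtain ⟨hF1, hF2⟩ := hF₀
  have haM : -M ≤ a ∧ a ≤ M := ⟨by linarith [ha.1], by linarith [ha.2]⟩
  have hbM : (-M ≤ b ∧ b ≤ M) ∧ 0 ≤ (sigm b - e) * (a - b) := by
    rw [hb]
    by_cases hcase : η₀ < |2*e-1|
    · rw [if_pos hcase]
      rcases abs_cases (2*e-1) with ⟨heq, _⟩ | ⟨heq, hneg⟩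
      · have h2e : η₀ < 2*e-1 := by rw [heq] at hcase; exact hcase
        have hsgn : rsgn (2*e-1) = 1 := if_pos (by linarith)
        rw [hsgn, mul_one]
        have hs : sigm F₀ < (1+η₀)/2 := sigm_lt_of_lt ⟨h0, hlt⟩ (by linarith) hF2
        refine ⟨⟨by linarith, by linarith⟩, ?_⟩
        rw [show (sigm F₀ - e) * (a - F₀) = (e - sigm F₀) * (F₀ - a) by ring]
        apply mul_nonneg
        · linarith
        · linarith [ha.2]
      · have h2e : 2*e-1 < -η₀ := by rw [heq] at hcase; linarith
        have hsgn : rsgn (2*e-1) = -1 := if_neg (by linarith)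
        rw [hsgn, mul_neg_one]
        have hs : (1-η₀)/2 < sigm (-F₀) := sigm_gt_of_gt ⟨h0, hlt⟩ (by linarith) (by linarith)
        refine ⟨⟨by linarith, by linarith⟩, ?_⟩
        apply mul_nonneg
        · linarith
        · linarith [ha.1]
    · rw [if_neg hcase]
      push_neg at hcase
      obtain ⟨hm1, hm2, he0, he1⟩ := log_ratio_mem ⟨h0, hlt⟩ hcase
      refine ⟨⟨hm1, hm2⟩, ?_⟩
      rw [sigm_log e he0 he1]
      simp
  obtain ⟨⟨hb1, hb2⟩, hlin⟩ := hbM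
  have hquad := quad_growth (e := e) ⟨h0, hlt⟩ haM.1 haM.2 hb1 hb2
  have hsq1 : (logLoss a - logLoss b)^2 ≤ (a-b)^2 := by
    have := logLoss_lip a b
    calc (logLoss a - logLoss b)^2 = |logLoss a - logLoss b|^2 := (sq_abs _).symm
      _ ≤ |a-b|^2 := by apply pow_le_pow_left₀ (abs_nonneg _) this
      _ = (a-b)^2 := sq_abs _
  have hsq2 : (logLoss (-a) - logLoss (-b))^2 ≤ (a-b)^2 := by
    have := logLoss_lip (-a) (-b)
    calc (logLoss (-a) - logLoss (-b))^2 = |logLoss (-a) - logLoss (-b)|^2 := (sq_abs _).symm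
      _ ≤ |(-a)-(-b)|^2 := by apply pow_le_pow_left₀ (abs_nonneg _) this
      _ = (a-b)^2 := by rw [show (-a)-(-b) = -(a-b) by ring, abs_neg, sq_abs]
  have hK : (0:ℝ) < 8/(1-η₀^2) := by
    apply div_pos
    · norm_num
    · nlinarith
  have hgoalR : (a-b)^2 ≤ 8/(1-η₀^2) *
      (e * (logLoss a - logLoss b) + (1-e) * (logLoss (-a) - logLoss (-b))) := by
    have hq : (1-η₀^2)/8 * (a-b)^2 ≤
        e * (logLoss a - logLoss b) + (1-e) * (logLoss (-a) - logLoss (-b)) := by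
      linarith [hquad, hlin]
    have h8 : (0:ℝ) < 1 - η₀^2 := by nlinarith
    rw [div_mul_eq_mul_div, le_div_iff₀ h8]
    linarith [hq]
  have hLHS : e * (logLoss a - logLoss b)^2 + (1-e) * (logLoss (-a) - logLoss (-b))^2
      ≤ (a-b)^2 := by
    nlinarith [mul_le_mul_of_nonneg_left hsq1 he.1,
      mul_le_mul_of_nonneg_left hsq2 (by linarith [he.2] : (0:ℝ) ≤ 1-e)]
  linarith

lemma logLoss_le_bound (hη₀ : η₀ ∈ Set.Ioo (0:ℝ) 1) {t : ℝ}
    (ht : -Real.log ((1+η₀)/(1-η₀)) ≤ t) :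
    logLoss t ≤ Real.log (2/(1-η₀)) := by
  obtain ⟨h0, hlt⟩ := hη₀
  have h1 := logLoss_anti ht
  have h2 : logLoss (-Real.log ((1+η₀)/(1-η₀))) = Real.log (2/(1-η₀)) := by
    unfold logLoss
    rw [neg_neg, Real.exp_log (by apply div_pos <;> linarith)]
    congr 1
    have hne : (1:ℝ) - η₀ ≠ 0 := ne_of_gt (by linarith)
    field_simp
    norm_num
  linarith

lemma cube_measurableSet (d : ℕ) : MeasurableSet (cube d) := by
  have : cube d = Set.univ.pi (fun _ : Fin d => Set.Icc (0:ℝ) 1) := by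
    ext x
    exact ⟨fun h i _ => h i, fun h i => h i (Set.mem_univ i)⟩
  rw [this]
  exact MeasurableSet.univ_pi fun i => measurableSet_Icc

lemma branch_lemma {d : ℕ} (Q : Measure (Fin d → ℝ)) [IsProbabilityMeasure Q]
    (hQc : ∀ᵐ x ∂Q, x ∈ cube d)
    (ρ : (Fin d → ℝ) → ℝ) (hρm : Measurable ρ) (hρ01 : ∀ x, ρ x ∈ Set.Icc (0:ℝ) 1)
    (y : ℝ) (g : (Fin d → ℝ) × ℝ → ℝ) (hg : Measurable g) (C : ℝ)
    (hb : ∀ x ∈ cube d, |g (x,y)| ≤ C) :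
    Integrable g ((Q.withDensity fun x => ENNReal.ofReal (ρ x)).map (fun x => (x, y))) ∧
    Integrable (fun x => ρ x * g (x,y)) Q ∧
    ∫ z, g z ∂((Q.withDensity fun x => ENNReal.ofReal (ρ x)).map (fun x => (x, y)))
      = ∫ x, ρ x * g (x,y) ∂Q := by
  set μ := Q.withDensity fun x => ENNReal.ofReal (ρ x) with hμ
  have hrw : (fun x => ENNReal.ofReal (ρ x)) = fun x => ((ρ x).toNNReal : ℝ≥0∞) := rfl
  have hac : μ ≪ Q := withDensity_absolutelyContinuous _ _
  have hμcube : ∀ᵐ x ∂μ, x ∈ cube d := hac.ae_le hQc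
  have hpm : Measurable (fun x : Fin d → ℝ => (x, y)) := measurable_id.prodMk measurable_const
  have hmeasQ : Measurable (fun x => ρ x * g (x,y)) := hρm.mul (hg.comp hpm)
  have hintQ : Integrable (fun x => ρ x * g (x,y)) Q := by
    refine ⟨hmeasQ.aestronglyMeasurable, HasFiniteIntegral.of_bounded (C := C) ?_⟩
    filter_upwards [hQc] with x hx
    have h1 := hb x hx
    have h2 := hρ01 x
    rw [Real.norm_eq_abs, abs_mul, abs_of_nonneg h2.1]
    calc ρ x * |g (x,y)| ≤ 1 * |g (x,y)| := by
          apply mul_le_mul_of_nonneg_right h2.2 (abs_nonneg _)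
      _ = |g (x,y)| := one_mul _
      _ ≤ C := h1
  have hfin : IsFiniteMeasure μ := by
    constructor
    rw [hμ, withDensity_apply _ MeasurableSet.univ, Measure.restrict_univ]
    calc ∫⁻ x, ENNReal.ofReal (ρ x) ∂Q ≤ ∫⁻ _, 1 ∂Q :=
          lintegral_mono fun x => ENNReal.ofReal_le_one.mpr (hρ01 x).2
      _ = Q Set.univ := by simp
      _ < ⊤ := measure_lt_top Q _
  have hintμ : Integrable (fun x => g (x,y)) μ := by
    refine ⟨(hg.comp hpm).aestronglyMeasurable, HasFiniteIntegral.of_bounded (C := C) ?_⟩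
    filter_upwards [hμcube] with x hx
    rw [Real.norm_eq_abs]
    exact hb x hx
  have hintmap : Integrable g (μ.map (fun x => (x, y))) := by
    rw [integrable_map_measure hg.aestronglyMeasurable hpm.aemeasurable]
    exact hintμ
  refine ⟨hintmap, hintQ, ?_⟩
  rw [integral_map hpm.aemeasurable hg.aestronglyMeasurable]
  rw [hμ, hrw, integral_withDensity_eq_integral_smul hρm.real_toNNReal]
  apply integral_congr_ae
  apply Filter.Eventually.of_forall
  intro x
  show (ρ x).toNNReal • g (x,y) = ρ x * g (x,y)
  rw [NNReal.smul_def, Real.coe_toNNReal _ (hρ01 x).1, smul_eq_mul]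

lemma integral_PeQ {d : ℕ} (Q : Measure (Fin d → ℝ)) [IsProbabilityMeasure Q]
    (hQ : Q (cube d) = 1) (η : (Fin d → ℝ) → ℝ) (hηm : Measurable η)
    (hη01 : ∀ x, η x ∈ Set.Icc (0:ℝ) 1)
    (g : (Fin d → ℝ) × ℝ → ℝ) (hg : Measurable g) (C : ℝ)
    (hb : ∀ x ∈ cube d, |g (x,1)| ≤ C ∧ |g (x,-1)| ≤ C) :
    Integrable (fun x => η x * g (x,1) + (1-η x) * g (x,-1)) Q ∧
    ∫ z, g z ∂(PeQ d Q η) = ∫ x, η x * g (x,1) + (1 - η x) * g (x,-1) ∂Q := by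
  have hcube : ∀ᵐ x ∂Q, x ∈ cube d := by
    have hc := measure_compl (cube_measurableSet d) (measure_ne_top Q _)
    rw [hQ, measure_univ] at hc
    simp only [tsub_self] at hc
    rw [ae_iff]
    exact hc
  have h1 := branch_lemma Q hcube η hηm hη01 1 g hg C (fun x hx => (hb x hx).1)
  have h2 := branch_lemma Q hcube (fun x => 1 - η x) (measurable_const.sub hηm)
    (fun x => ⟨by linarith [(hη01 x).2], by linarith [(hη01 x).1]⟩)
    (-1) g hg C (fun x hx => (hb x hx).2)
  refine ⟨h1.2.1.add h2.2.1, ?_⟩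
  rw [show PeQ d Q η = (Q.withDensity fun x => ENNReal.ofReal (η x)).map (fun x => (x, (1:ℝ)))
    + (Q.withDensity fun x => ENNReal.ofReal (1 - η x)).map (fun x => (x, (-1:ℝ))) from rfl]
  rw [integral_add_measure h1.1 h2.1, h1.2.2, h2.2.2]
  exact (integral_add h1.2.1 h2.2.1).symm

end Statement12Aux

/-- Lemma 5.8: properties of the comparison function `ψ` built from
`F₀ · sgn(2η - 1)`. -/
theorem statement12 (η₀ F₀ : ℝ) (hη₀ : η₀ ∈ Set.Ioo (0 : ℝ) 1)
    (hF₀ : F₀ ∈ Set.Ioo (0 : ℝ) (Real.log ((1 + η₀) / (1 - η₀))))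
    (d : ℕ) (hd : 0 < d) (Q : Measure (Fin d → ℝ)) [IsProbabilityMeasure Q]
    (hQ : Q (cube d) = 1)
    (η : (Fin d → ℝ) → ℝ) (hηm : Measurable η) (hη01 : ∀ x, η x ∈ Set.Icc (0 : ℝ) 1)
    (ψ : (Fin d → ℝ) × ℝ → ℝ)
    (hψ : ∀ (x : Fin d → ℝ) (y : ℝ),
      ψ (x, y) = if η₀ < |2 * η x - 1| then logLoss (y * F₀ * rsgn (2 * η x - 1))
        else logLoss (y * Real.log (η x / (1 - η x)))) :
    (∀ f : (Fin d → ℝ) → ℝ, Measurable f → (∀ x ∈ cube d, f x ∈ Set.Icc (-F₀) F₀) →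
      ∫ z, (logLoss (z.2 * f z.1) - ψ z) ^ 2 ∂(PeQ d Q η)
        ≤ 8 / (1 - η₀ ^ 2) * ∫ z, (logLoss (z.2 * f z.1) - ψ z) ∂(PeQ d Q η)) ∧
    (∀ x ∈ cube d, ∀ y : ℝ, y = 1 ∨ y = -1 →
      ψ (x, y) ∈ Set.Icc (0 : ℝ) (Real.log (2 / (1 - η₀)))) := by
  obtain ⟨h0, hlt⟩ := hη₀
  set M := Real.log ((1+η₀)/(1-η₀)) with hM
  have hψfun : ψ = fun z : (Fin d → ℝ) × ℝ =>
      if η₀ < |2 * η z.1 - 1| then logLoss (z.2 * F₀ * rsgn (2 * η z.1 - 1))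
      else logLoss (z.2 * Real.log (η z.1 / (1 - η z.1))) := by
    funext z
    obtain ⟨x, y⟩ := z
    exact hψ x y
  have hψm : Measurable ψ := by
    rw [hψfun]
    have hin : Measurable (fun z : (Fin d → ℝ) × ℝ => 2 * η z.1 - 1) :=
      ((hηm.comp measurable_fst).const_mul 2).sub measurable_const
    have hcond : MeasurableSet {z : (Fin d → ℝ) × ℝ | η₀ < |2 * η z.1 - 1|} :=
      measurableSet_lt measurable_const hin.abs
    apply Measurable.ite hcond
    · exact continuous_logLoss.measurable.comp
        ((measurable_snd.mul_const F₀).mul (measurable_rsgn.comp hin))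
    · exact continuous_logLoss.measurable.comp
        (measurable_snd.mul (Real.measurable_log.comp
          ((hηm.comp measurable_fst).div (measurable_const.sub (hηm.comp measurable_fst)))))
  -- range of ψ (part b, valid for all x)
  have hψrange : ∀ x : Fin d → ℝ, ∀ y : ℝ, y = 1 ∨ y = -1 →
      ψ (x, y) ∈ Set.Icc (0:ℝ) (Real.log (2 / (1 - η₀))) := by
    intro x y hy
    rw [hψ x y]
    split_ifs with hc
    · refine ⟨logLoss_nonneg _, logLoss_le_bound ⟨h0, hlt⟩ ?_⟩
      unfold rsgn
      rcases hy with rfl | rfl <;> split_ifs <;> · norm_num; linarith [hF₀.1, hF₀.2]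
    · push_neg at hc
      obtain ⟨hm1, hm2, _, _⟩ := log_ratio_mem (η₀ := η₀) ⟨h0, hlt⟩ hc
      refine ⟨logLoss_nonneg _, logLoss_le_bound ⟨h0, hlt⟩ ?_⟩
      rcases hy with rfl | rfl
      · rw [one_mul]; exact hm1
      · rw [neg_one_mul]; linarith
  constructor
  · -- part (a)
    intro f hf hfb
    have hcube : ∀ᵐ x ∂Q, x ∈ cube d := by
      have hc := measure_compl (cube_measurableSet d) (measure_ne_top Q _)
      rw [hQ, measure_univ] at hc
      simp only [tsub_self] at hc
      rw [ae_iff]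
      exact hc
    have hg₁m : Measurable (fun z : (Fin d → ℝ) × ℝ => logLoss (z.2 * f z.1) - ψ z) :=
      (continuous_logLoss.measurable.comp (measurable_snd.mul (hf.comp measurable_fst))).sub hψm
    set C₁ : ℝ := Real.log (1 + Real.exp F₀) + Real.log (2/(1-η₀)) with hC₁
    have hC₁0 : 0 ≤ C₁ := by
      rw [hC₁]
      have e1 : (0:ℝ) ≤ Real.log (1 + Real.exp F₀) :=
        Real.log_nonneg (by linarith [Real.exp_pos F₀])
      have e2 : (0:ℝ) ≤ Real.log (2/(1-η₀)) := by
        apply Real.log_nonneg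
        rw [le_div_iff₀ (by linarith)]
        linarith
      linarith
    have hbound : ∀ x ∈ cube d, ∀ y : ℝ, y = 1 ∨ y = -1 →
        |logLoss (y * f x) - ψ (x, y)| ≤ C₁ := by
      intro x hx y hy
      have hψb := hψrange x y hy
      rw [Set.mem_Icc] at hψb
      have hL0 : 0 ≤ logLoss (y * f x) := logLoss_nonneg _
      have hLup : logLoss (y * f x) ≤ Real.log (1 + Real.exp F₀) := by
        have harg : -F₀ ≤ y * f x := by
          rcases hy with rfl | rfl
          · rw [one_mul]; exact (hfb x hx).1
          · rw [neg_one_mul]; linarith [(hfb x hx).2]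
        have := logLoss_anti harg
        simpa [logLoss, neg_neg] using this
      have e1' : (0:ℝ) ≤ Real.log (1 + Real.exp F₀) :=
        Real.log_nonneg (by linarith [Real.exp_pos F₀])
      have e2' : (0:ℝ) ≤ Real.log (2/(1-η₀)) := by
        apply Real.log_nonneg
        rw [le_div_iff₀ (by linarith)]
        linarith
      rw [abs_le, hC₁]
      constructor <;> linarith [hψb.1, hψb.2]
    have hA := integral_PeQ Q hQ η hηm hη01
      (fun z => logLoss (z.2 * f z.1) - ψ z) hg₁m C₁
      (fun x hx => ⟨hbound x hx 1 (Or.inl rfl), hbound x hx (-1) (Or.inr rfl)⟩)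
    have hg₂m : Measurable (fun z : (Fin d → ℝ) × ℝ => (logLoss (z.2 * f z.1) - ψ z)^2) :=
      hg₁m.pow_const 2
    have hB := integral_PeQ Q hQ η hηm hη01
      (fun z => (logLoss (z.2 * f z.1) - ψ z)^2) hg₂m (C₁^2)
      (fun x hx => by
        constructor <;>
        · rw [show ∀ u : ℝ, |u^2| = |u|^2 from fun u => by rw [sq_abs, abs_pow, sq_abs]]
          apply pow_le_pow_left₀ (abs_nonneg _)
          first
          | exact hbound x hx 1 (Or.inl rfl)
          | exact hbound x hx (-1) (Or.inr rfl))
    rw [hA.2, hB.2]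
    have hmono : ∀ᵐ x ∂Q,
        η x * (logLoss ((1:ℝ) * f x) - ψ (x, 1))^2
          + (1 - η x) * (logLoss ((-1:ℝ) * f x) - ψ (x, -1))^2
        ≤ 8/(1-η₀^2) * (η x * (logLoss ((1:ℝ) * f x) - ψ (x, 1))
          + (1 - η x) * (logLoss ((-1:ℝ) * f x) - ψ (x, -1))) := by
      filter_upwards [hcube] with x hx
      set b : ℝ := if η₀ < |2 * η x - 1| then F₀ * rsgn (2 * η x - 1)
        else Real.log (η x / (1 - η x)) with hbdef
      have hψ1 : ψ (x, 1) = logLoss b := by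
        rw [hψ x 1, hbdef]
        split_ifs with h <;> rw [one_mul]
      have hψ2 : ψ (x, -1) = logLoss (-b) := by
        rw [hψ x (-1), hbdef]
        split_ifs with h
        · rw [show (-1:ℝ) * F₀ * rsgn (2 * η x - 1) = -(F₀ * rsgn (2 * η x - 1)) by ring]
        · rw [neg_one_mul]
      rw [one_mul, neg_one_mul, hψ1, hψ2]
      exact core_pointwise ⟨h0, hlt⟩ hF₀ (hη01 x) (hfb x hx) b hbdef
    calc ∫ x, η x * (logLoss ((1:ℝ) * f x) - ψ (x, 1))^2
          + (1 - η x) * (logLoss ((-1:ℝ) * f x) - ψ (x, -1))^2 ∂Q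
        ≤ ∫ x, 8/(1-η₀^2) * (η x * (logLoss ((1:ℝ) * f x) - ψ (x, 1))
          + (1 - η x) * (logLoss ((-1:ℝ) * f x) - ψ (x, -1))) ∂Q :=
          integral_mono_ae hB.1 (hA.1.const_mul _) hmono
      _ = 8/(1-η₀^2) * ∫ x, η x * (logLoss ((1:ℝ) * f x) - ψ (x, 1))
          + (1 - η x) * (logLoss ((-1:ℝ) * f x) - ψ (x, -1)) ∂Q := integral_const_mul _ _
  · -- part (b)
    intro x _ y hy
    exact hψrange x y hy


end

end DNNLogistic
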